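/- Let σ : ℝ → ℝ be absolutely continuous with 0 ≤ σ'(s) ≤ 1 almost everywhere, applied componentwise, and let A ∈ ℝ^{M×M}, b ∈ ℝ^M. Then the vector field f(z) = -Aᵀ σ(Az + b) satisfies -‖A(z₂ - z₁)‖² ≤ ⟨f(z₂) - f(z₁), z₂ - z₁⟩ ≤ 0 for all z₁, z₂ ∈ ℝ^M. -/

import Mathlib

open Matrix

/-- The gradient-system vector field `f(z) = -Aᵀ σ(Az + b)` with `σ` applied
componentwise. -/
noncomputable def gradSysField {M : ℕ} (σ : ℝ → ℝ) (A : Matrix (Fin M) (Fin M) ℝ)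
    (b : EuclideanSpace ℝ (Fin M)) (z : EuclideanSpace ℝ (Fin M)) :
    EuclideanSpace ℝ (Fin M) :=
  -(Matrix.toEuclideanLin Aᵀ ((EuclideanSpace.equiv (Fin M) ℝ).symm
    fun i => σ ((Matrix.toEuclideanLin A z + b) i)))

lemma sigma_key (σ : ℝ → ℝ)
    (hσ : ∀ s t : ℝ, t ≤ s → σ s - σ t ∈ Set.Icc 0 (s - t)) (a c : ℝ) :
    0 ≤ (σ a - σ c) * (a - c) ∧ (σ a - σ c) * (a - c) ≤ (a - c) ^ 2 := by
  rcases le_total c a with h | h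
  · obtain ⟨h1, h2⟩ := hσ a c h
    constructor
    · exact mul_nonneg h1 (by linarith)
    · nlinarith
  · obtain ⟨h1, h2⟩ := hσ c a h
    constructor
    · nlinarith
    · nlinarith

theorem gradSysField_onesided_bounds {M : ℕ} (σ : ℝ → ℝ)
    (hσ : ∀ s t : ℝ, t ≤ s → σ s - σ t ∈ Set.Icc 0 (s - t))
    (A : Matrix (Fin M) (Fin M) ℝ) (b : EuclideanSpace ℝ (Fin M)) :
    ∀ z₁ z₂ : EuclideanSpace ℝ (Fin M),
      -‖Matrix.toEuclideanLin A (z₂ - z₁)‖ ^ 2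
          ≤ (@inner ℝ _ _ (gradSysField σ A b z₂ - gradSysField σ A b z₁) (z₂ - z₁)) ∧
      (@inner ℝ _ _ (gradSysField σ A b z₂ - gradSysField σ A b z₁) (z₂ - z₁)) ≤ 0 := by
  intro z₁ z₂
  -- abbreviations
  set u₁ : Fin M → ℝ := fun i => (Matrix.toEuclideanLin A z₁ + b) i with hu₁
  set u₂ : Fin M → ℝ := fun i => (Matrix.toEuclideanLin A z₂ + b) i with hu₂
  have happly : ∀ (x : EuclideanSpace ℝ (Fin M)) (i : Fin M),
      Matrix.toEuclideanLin A x i = ∑ j, A i j * x j := by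
    intro x i
    simp [Matrix.toEuclideanLin_apply, Matrix.mulVec, dotProduct]
  have happlyT : ∀ (x : EuclideanSpace ℝ (Fin M)) (i : Fin M),
      Matrix.toEuclideanLin Aᵀ x i = ∑ j, A j i * x j := by
    intro x i
    simp [Matrix.toEuclideanLin_apply, Matrix.mulVec, dotProduct, Matrix.transpose_apply]
  have hdiff : ∀ j, Matrix.toEuclideanLin A (z₂ - z₁) j = u₂ j - u₁ j := by
    intro j
    have := map_sub (Matrix.toEuclideanLin A) z₂ z₁
    simp only [hu₁, hu₂, PiLp.add_apply]
    rw [this]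
    simp [PiLp.sub_apply]
  -- inner product formula
  have hinner : (@inner ℝ _ _ (gradSysField σ A b z₂ - gradSysField σ A b z₁) (z₂ - z₁))
      = -∑ j, (σ (u₂ j) - σ (u₁ j)) * (u₂ j - u₁ j) := by
    have hbase : (@inner ℝ _ _ (gradSysField σ A b z₂ - gradSysField σ A b z₁) (z₂ - z₁))
        = ∑ i, (gradSysField σ A b z₂ - gradSysField σ A b z₁) i * (z₂ - z₁) i := by
      simp [PiLp.inner_apply, RCLike.inner_apply]
      exact Finset.sum_congr rfl fun i _ => mul_comm _ _
    have h1 : ∀ i, (gradSysField σ A b z₂ - gradSysField σ A b z₁) i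
        = ∑ j, -((σ (u₂ j) - σ (u₁ j)) * A j i) := by
      intro i
      simp only [gradSysField, PiLp.sub_apply, PiLp.neg_apply]
      rw [happlyT, happlyT]
      simp only [EuclideanSpace.equiv, PiLp.continuousLinearEquiv_symm_apply,
        PiLp.toLp_apply, hu₁, hu₂]
      rw [neg_sub_neg, ← Finset.sum_sub_distrib]
      refine Finset.sum_congr rfl fun j _ => ?_
      ring
    rw [hbase]
    calc ∑ i, (gradSysField σ A b z₂ - gradSysField σ A b z₁) i * (z₂ - z₁) i
        = ∑ i, ∑ j, -((σ (u₂ j) - σ (u₁ j)) * A j i * ((z₂ : Fin M → ℝ) i - z₁ i)) := by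
          refine Finset.sum_congr rfl fun i _ => ?_
          rw [h1 i, Finset.sum_mul]
          refine Finset.sum_congr rfl fun j _ => ?_
          simp only [PiLp.sub_apply]
          ring
      _ = ∑ j, ∑ i, -((σ (u₂ j) - σ (u₁ j)) * A j i * ((z₂ : Fin M → ℝ) i - z₁ i)) :=
          Finset.sum_comm
      _ = ∑ j, -((σ (u₂ j) - σ (u₁ j)) * (u₂ j - u₁ j)) := by
          refine Finset.sum_congr rfl fun j _ => ?_
          have huu : u₂ j - u₁ j = ∑ i, A j i * ((z₂ : Fin M → ℝ) i - z₁ i) := by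
            rw [← hdiff j, happly]
            refine Finset.sum_congr rfl fun i _ => ?_
            simp [PiLp.sub_apply]
          rw [huu, Finset.mul_sum, ← Finset.sum_neg_distrib]
          refine Finset.sum_congr rfl fun i _ => ?_
          ring
      _ = -∑ j, (σ (u₂ j) - σ (u₁ j)) * (u₂ j - u₁ j) := by
          rw [Finset.sum_neg_distrib]
  have hnorm : ‖Matrix.toEuclideanLin A (z₂ - z₁)‖ ^ 2 = ∑ j, (u₂ j - u₁ j) ^ 2 := by
    rw [← real_inner_self_eq_norm_sq]
    simp only [PiLp.inner_apply, RCLike.inner_apply, starRingEnd_apply, star_trivial]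
    refine Finset.sum_congr rfl fun j _ => ?_
    rw [hdiff j]; ring
  rw [hinner]
  constructor
  · rw [hnorm, neg_le_neg_iff]
    refine Finset.sum_le_sum fun j _ => ?_
    exact (sigma_key σ hσ (u₂ j) (u₁ j)).2
  · rw [neg_nonpos]
    exact Finset.sum_nonneg fun j _ => (sigma_key σ hσ (u₂ j) (u₁ j)).1
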